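/- Let A ⊆ T be an inclusion of F-finite F-pure domains of prime characteristic p that is differentially extensible with respect to the level filtration (every A^{p^e}-linear endomorphism of A extends to a T^{p^e}-linear endomorphism of T). Then the inclusion is Cartier extensible: every p^{-e}-linear map ψ : A → A (i.e., additive with ψ(r^{p^e} a) = r ψ(a)) extends to a p^{-e}-linear map ψ̃ : T → T with ψ̃|_A = ψ. -/

import Mathlib

/-- **Lemma (level-differential extensibility implies Cartier extensibility).**
Let `A ⊆ T` be an inclusion of `F`-finite `F`-pure domains of prime characteristic
`p` that is differentially extensible with respect to the level filtration, i.e.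
every `A^{p^e}`-linear endomorphism of `A` extends to a `T^{p^e}`-linear endomorphism
of `T`.  Then the inclusion is Cartier extensible: every `p^{-e}`-linear map
`ψ : A → A` (additive with `ψ(r^{p^e}·a) = r·ψ(a)`) extends to a `p^{-e}`-linear map
`ψ̃ : T → T` with `ψ̃|_A = ψ`. -/
theorem cartierExtensible_of_levelDifferentiallyExtensible
    {p : ℕ} (hp : p.Prime) {T : Type*} [CommRing T] [IsDomain T] [CharP T p]
    (A : Subring T)
    -- `T` is `F`-finite: `T` is a finitely generated module over its subring of
    -- `p^e`-th powers, for every `e`.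
    (hFFT : ∀ e : ℕ, ∃ s : Finset T, ∀ t : T, ∃ c : T → T,
        t = ∑ x ∈ s, c x ^ p ^ e * x)
    -- `A` is `F`-finite.
    (hFFA : ∀ e : ℕ, ∃ s : Finset A, ∀ t : A, ∃ c : A → A,
        t = ∑ x ∈ s, c x ^ p ^ e * x)
    -- `T` is `F`-pure: the inclusion `T → F^e_* T` splits `T`-linearly.
    (hFPT : ∀ e : ℕ, 0 < e → ∃ π : T →+ T,
        (∀ r t : T, π (r ^ p ^ e * t) = r * π t) ∧ ∀ t : T, π (t ^ p ^ e) = t)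
    -- `A` is `F`-pure.
    (hFPA : ∀ e : ℕ, 0 < e → ∃ π : A →+ A,
        (∀ r t : A, π (r ^ p ^ e * t) = r * π t) ∧ ∀ t : A, π (t ^ p ^ e) = t)
    -- the inclusion `A ⊆ T` is level-differentially extensible.
    (hLDE : ∀ (e : ℕ) (φ : A →+ A),
        (∀ r x : A, φ (r ^ p ^ e * x) = r ^ p ^ e * φ x) →
        ∃ φ' : T →+ T, (∀ r x : T, φ' (r ^ p ^ e * x) = r ^ p ^ e * φ' x) ∧
          ∀ a : A, φ' ↑a = ↑(φ a)) :
    -- then the inclusion `A ⊆ T` is Cartier extensible.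
    ∀ (e : ℕ) (ψ : A →+ A),
      (∀ r x : A, ψ (r ^ p ^ e * x) = r * ψ x) →
      ∃ ψ' : T →+ T, (∀ r x : T, ψ' (r ^ p ^ e * x) = r * ψ' x) ∧
        ∀ a : A, ψ' ↑a = ↑(ψ a) := by
  intro e ψ hψ
  rcases Nat.eq_zero_or_pos e with he | he
  · -- level 0: Cartier maps are just linear maps, use hLDE directly
    subst he
    obtain ⟨φ', hφ', hres⟩ := hLDE 0 ψ (by simpa using hψ)
    exact ⟨φ', by simpa using hφ', hres⟩
  · haveI : Fact p.Prime := ⟨hp⟩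
    haveI : CharP A p := CharP.subring T p A
    -- φ = Frobenius^e ∘ ψ is additive and p^e-linear
    have hadd : ∀ x y : A, (x + y) ^ p ^ e = x ^ p ^ e + y ^ p ^ e := fun x y =>
      add_pow_char_pow x y p e
    let φ : A →+ A :=
      { toFun := fun a => ψ a ^ p ^ e
        map_zero' := by simp [zero_pow (pow_ne_zero e hp.ne_zero)]
        map_add' := fun x y => by simp [map_add, hadd] }
    have hφ : ∀ r x : A, φ (r ^ p ^ e * x) = r ^ p ^ e * φ x := by
      intro r x
      simp only [φ, AddMonoidHom.coe_mk, ZeroHom.coe_mk, hψ, mul_pow]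
    obtain ⟨φ', hφ', hres⟩ := hLDE e φ hφ
    obtain ⟨π, hπ, hπF⟩ := hFPT e he
    refine ⟨π.comp φ', ?_, ?_⟩
    · intro r x
      simp [AddMonoidHom.comp_apply, hφ', hπ]
    · intro a
      have := hres a
      simp only [AddMonoidHom.comp_apply, this]
      have : ((φ a : A) : T) = ((ψ a : A) : T) ^ p ^ e := by
        simp [φ]
      rw [this, hπF]
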